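/- Let R be a Noetherian commutative ring and n ≥ 1. If for every maximal ideal 𝔪 of R the localization R_𝔪 has the property that every element of ⋀^n(R_𝔪)^{n+1} is decomposable, then for every prime ideal 𝔭 of R the localization R_𝔭 has the same property. -/

import Mathlib

/-- A commutative ring `A` is `T_n^{n+1}` if every element of `⋀^n A^{n+1}` is
decomposable, i.e. equal to `v 0 ∧ ⋯ ∧ v (n-1)` for some vectors `v i ∈ A^{n+1}`. -/
def IsTn (A : Type*) [CommRing A] (n : ℕ) : Prop :=
  ∀ w : (⋀[A]^n (Fin (n + 1) → A)),
    ∃ v : Fin n → (Fin (n + 1) → A),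
      (w : ExteriorAlgebra A (Fin (n + 1) → A)) = ExteriorAlgebra.ιMulti A n v

open ExteriorAlgebra in
/-- `T_n^{n+1}` passes to localizations (for `n ≥ 1`). -/
theorem isTn_of_isLocalization {A B : Type*} [CommRing A] [CommRing B] [Algebra A B]
    (S : Submonoid A) [IsLocalization S B] {n : ℕ} (hn : 1 ≤ n) (hA : IsTn A n) :
    IsTn B n := by
  classical
  set f := algebraMap A B with hf
  set M := (Fin (n + 1) → A)
  set M' := (Fin (n + 1) → B)
  set E := ExteriorAlgebra B M' with hE
  haveI : IsScalarTower A B E := inferInstance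
  -- the induced algebra map between the exterior algebras
  let g : M →ₗ[A] E :=
    ((ExteriorAlgebra.ι B).restrictScalars A).comp ((Algebra.linearMap A B).compLeft (Fin (n+1)))
  have hg : ∀ m, g m * g m = 0 := fun m => ι_sq_zero _
  let φ : ExteriorAlgebra A M →ₐ[A] E := ExteriorAlgebra.lift A ⟨g, hg⟩
  have φι : ∀ m : M, φ (ExteriorAlgebra.ι A m) = ExteriorAlgebra.ι B (fun j => f (m j)) :=
    fun m => ExteriorAlgebra.lift_ι_apply A g hg m
  have φιMulti : ∀ v : Fin n → M,
      φ (ιMulti A n v) = ιMulti B n (fun i j => f (v i j)) := by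
    intro v
    rw [ιMulti_apply, ιMulti_apply, map_list_prod]
    congr 1
    simp only [List.map_ofFn]
    congr 1
    ext i
    exact φι (v i)
  -- main claim: every element of the n-th exterior power of M' is, after scaling by
  -- a denominator, in the image of φ of the n-th exterior power over A.
  have key : ∀ x ∈ (⋀[B]^n M' : Submodule B E),
      ∃ (s : S) (y : ExteriorAlgebra A M), y ∈ (⋀[A]^n M : Submodule A _) ∧ f s • x = φ y := by
    intro x hx
    rw [← ιMulti_span_fixedDegree] at hx
    induction hx using Submodule.span_induction with
    | mem x hmem =>
      obtain ⟨v, rfl⟩ := hmem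
      obtain ⟨s, hs⟩ := IsLocalization.exist_integer_multiples_of_finite S
        (fun p : Fin n × Fin (n + 1) => v p.1 p.2)
      choose u hu using fun p => hs p
      refine ⟨s ^ n, ιMulti A n (fun i j => u (i, j)), ExteriorAlgebra.ιMulti_range A n ⟨_, rfl⟩, ?_⟩
      rw [φιMulti]
      have h1 : ιMulti B n (fun i j => f (u (i, j))) = ιMulti B n (fun i => f s • v i) := by
        congr 1
        ext i j
        rw [hu (i, j), Algebra.smul_def]
        rfl
      rw [h1]
      have h2 := ((ιMulti B n (M := M')) : MultilinearMap B (fun _ : Fin n => M') E).map_smul_univ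
        (fun _ => f s) v
      simp only [AlternatingMap.coe_multilinearMap] at h2
      rw [h2]
      simp [Finset.prod_const, map_pow]
    | zero => exact ⟨1, 0, Submodule.zero_mem _, by simp⟩
    | add x y hx hy ihx ihy =>
      obtain ⟨s₁, y₁, hy₁, he₁⟩ := ihx
      obtain ⟨s₂, y₂, hy₂, he₂⟩ := ihy
      refine ⟨s₁ * s₂, (s₂ : A) • y₁ + (s₁ : A) • y₂,
        Submodule.add_mem _ (Submodule.smul_mem _ _ hy₁) (Submodule.smul_mem _ _ hy₂), ?_⟩
      rw [map_add, map_smul, map_smul, ← algebraMap_smul B ((s₂ : A)) (φ y₁),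
        ← algebraMap_smul B ((s₁ : A)) (φ y₂), ← he₁, ← he₂]
      simp only [Submonoid.coe_mul, map_mul]
      module
    | smul c x hx ihx =>
      obtain ⟨s₁, y₁, hy₁, he₁⟩ := ihx
      obtain ⟨⟨a, s₂⟩, hs₂⟩ := IsLocalization.surj S c
      refine ⟨s₂ * s₁, a • y₁, Submodule.smul_mem _ _ hy₁, ?_⟩
      rw [map_smul, ← algebraMap_smul B a (φ y₁), ← he₁]
      simp only at hs₂
      simp only [Submonoid.coe_mul, map_mul, smul_smul, ← hs₂]
      congr 1
      ring
  -- conclude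
  intro w
  obtain ⟨s, y, hy, he⟩ := key w.1 w.2
  obtain ⟨v, hv⟩ := hA ⟨y, hy⟩
  simp only at hv
  rw [hv, φιMulti] at he
  have hu : IsUnit (f s) := IsLocalization.map_units B s
  set i0 : Fin n := ⟨0, hn⟩
  set v' : Fin n → M' := fun i j => f (v i j)
  refine ⟨Function.update v' i0 (((hu.unit⁻¹ : Bˣ) : B) • v' i0), ?_⟩
  have h3 := ((ιMulti B n (M := M')).map_update_smul v' i0 ((hu.unit⁻¹ : Bˣ) : B) (v' i0))
  rw [Function.update_eq_self] at h3
  rw [h3, ← he, smul_smul, hu.val_inv_mul, one_smul]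

/-- Let `R` be a Noetherian commutative ring and `n ≥ 1`. If for every maximal ideal
`𝔪` the localization `R_𝔪` satisfies `T_n^{n+1}` (every element of `⋀^n (R_𝔪)^{n+1}`
is decomposable), then for every prime `𝔭` the localization `R_𝔭` satisfies
`T_n^{n+1}` as well. -/
theorem stmt18 (R : Type*) [CommRing R] [IsNoetherianRing R] (n : ℕ) (hn : 1 ≤ n)
    (h : ∀ (𝔪 : Ideal R) [𝔪.IsMaximal], IsTn (Localization.AtPrime 𝔪) n) :
    ∀ (𝔭 : Ideal R) [𝔭.IsPrime], IsTn (Localization.AtPrime 𝔭) n := by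
  intro 𝔭 h𝔭
  obtain ⟨𝔪, h𝔪, hle⟩ := 𝔭.exists_le_maximal h𝔭.ne_top
  haveI := h𝔪
  have hc : 𝔪.primeCompl ≤ 𝔭.primeCompl := fun x hx hmem => hx (hle hmem)
  letI : Algebra (Localization.AtPrime 𝔪) (Localization.AtPrime 𝔭) :=
    IsLocalization.localizationAlgebraOfSubmonoidLe _ _ 𝔪.primeCompl 𝔭.primeCompl hc
  haveI : IsScalarTower R (Localization.AtPrime 𝔪) (Localization.AtPrime 𝔭) :=
    IsLocalization.localization_isScalarTower_of_submonoid_le _ _ 𝔪.primeCompl 𝔭.primeCompl hc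
  haveI := IsLocalization.isLocalization_of_submonoid_le (Localization.AtPrime 𝔪)
    (Localization.AtPrime 𝔭) 𝔪.primeCompl 𝔭.primeCompl hc
  exact isTn_of_isLocalization
    (𝔭.primeCompl.map (algebraMap R (Localization.AtPrime 𝔪))) hn (h 𝔪)
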